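/- arXiv:2008.10508 — 3 statements merged into one kernel-verified Lean document; each statement's English description precedes it below -/
import Mathlib

section
/- Let n ≥ 1 be a natural number, ε > 0, λ ∈ (0,1), and a < b real numbers. Let ψ : ℝ → ℝ be continuously differentiable on [a,b] with ψ(a) = 2ε, ψ(b) = 0, and −1−λ ≤ ψ'(r) ≤ −(1−λ) for all r ∈ [a,b]. Let γ : ℝ → ℝ be continuous with 0 ≤ γ ≤ 1, γ(ρ) = 1 for all ρ ∈ [0,ε], and γ(ρ) = 0 for all ρ ≥ 2ε. Then: (i) 0 < ∫_a^b γ(ψ(r)) · ψ(r)^n · (−ψ'(r)) dr ≤ (2ε)^{n+1}/(n+1); and (ii) ∫_a^b n · ψ(r)^{n−1} · ψ'(r)² · γ(ψ(r)) dr ≥ ((1−λ)(n+1)/(2^{n+1} ε)) · ∫_a^b γ(ψ(r)) · ψ(r)^n · (−ψ'(r)) dr. -/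
/-- Normalized estimate from the proof of the paper's Proposition 5.2:
(i) `0 < ∫_a^b γ(ψ) ψⁿ (-ψ') dr ≤ (2ε)^{n+1}/(n+1)`, and
(ii) `∫_a^b n ψ^{n-1} (ψ')² γ(ψ) dr ≥ ((1-λ)(n+1)/(2^{n+1} ε)) ∫_a^b γ(ψ) ψⁿ (-ψ') dr`. -/
theorem stmt_3 (n : ℕ) (hn : 1 ≤ n) (ε lam a b : ℝ) (hε : 0 < ε)
    (hlam : lam ∈ Set.Ioo (0 : ℝ) 1) (hab : a < b)
    (ψ ψ' : ℝ → ℝ)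
    (hψd : ∀ r ∈ Set.Icc a b, HasDerivAt ψ (ψ' r) r)
    (hψ'cont : ContinuousOn ψ' (Set.Icc a b))
    (hψa : ψ a = 2 * ε) (hψb : ψ b = 0)
    (hψ'bd : ∀ r ∈ Set.Icc a b, -1 - lam ≤ ψ' r ∧ ψ' r ≤ -(1 - lam))
    (γ : ℝ → ℝ) (hγ : Continuous γ)
    (hγ01 : ∀ ρ, 0 ≤ γ ρ ∧ γ ρ ≤ 1)
    (hγ1 : ∀ ρ ∈ Set.Icc (0 : ℝ) ε, γ ρ = 1)
    (hγ0 : ∀ ρ, 2 * ε ≤ ρ → γ ρ = 0) :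
    (0 < (∫ r in a..b, γ (ψ r) * ψ r ^ n * (-(ψ' r))) ∧
      (∫ r in a..b, γ (ψ r) * ψ r ^ n * (-(ψ' r))) ≤ (2 * ε) ^ (n + 1) / (n + 1)) ∧
    ((1 - lam) * (n + 1) / (2 ^ (n + 1) * ε)) *
        (∫ r in a..b, γ (ψ r) * ψ r ^ n * (-(ψ' r))) ≤
      ∫ r in a..b, (n : ℝ) * ψ r ^ (n - 1) * (ψ' r) ^ 2 * γ (ψ r) := by
  obtain ⟨hl0, hl1⟩ := hlam
  have hab' : a ≤ b := hab.le
  have huIcc : Set.uIcc a b = Set.Icc a b := Set.uIcc_of_le hab'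
  have hψc : ContinuousOn ψ (Set.Icc a b) := fun r hr =>
    (hψd r hr).continuousAt.continuousWithinAt
  -- ψ is antitone, hence 0 ≤ ψ ≤ 2ε on [a,b]
  have hanti : AntitoneOn ψ (Set.Icc a b) := by
    refine (strictAntiOn_of_deriv_neg (convex_Icc a b) hψc fun x hx => ?_).antitoneOn
    rw [interior_Icc] at hx
    rw [(hψd x (Set.Ioo_subset_Icc_self hx)).deriv]
    have := (hψ'bd x (Set.Ioo_subset_Icc_self hx)).2
    linarith
  have hψ0 : ∀ r ∈ Set.Icc a b, 0 ≤ ψ r := fun r hr => by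
    have := hanti hr (Set.right_mem_Icc.2 hab') hr.2
    rwa [hψb] at this
  -- key substitution lemma
  have key : ∀ g : ℝ → ℝ, Continuous g →
      (∫ r in a..b, g (ψ r) * (-(ψ' r))) = ∫ u in (0:ℝ)..(2*ε), g u := by
    intro g hg
    have h1 : (∫ r in a..b, ψ' r • (g ∘ ψ) r) = ∫ u in ψ a..ψ b, g u :=
      intervalIntegral.integral_comp_smul_deriv
        (fun x hx => hψd x (huIcc ▸ hx)) (huIcc ▸ hψ'cont) hg
    rw [hψa, hψb] at h1
    have h2 : (∫ r in a..b, g (ψ r) * (-(ψ' r)))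
        = -(∫ r in a..b, ψ' r • (g ∘ ψ) r) := by
      rw [← intervalIntegral.integral_neg]
      apply intervalIntegral.integral_congr
      intro x hx
      simp [Function.comp, smul_eq_mul]
      ring
    rw [h2, h1, intervalIntegral.integral_symm, neg_neg]
  -- the first integral as an integral over [0, 2ε]
  have hI : (∫ r in a..b, γ (ψ r) * ψ r ^ n * (-(ψ' r)))
      = ∫ u in (0:ℝ)..(2*ε), γ u * u ^ n :=
    key (fun u => γ u * u ^ n) (hγ.mul (continuous_pow n))
  have h2ε : (0:ℝ) ≤ 2 * ε := by linarith
  have hεle : ε ≤ 2 * ε := by linarith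
  -- elementary integrability facts on [0, 2ε]
  have hint1 : ∀ c d : ℝ, IntervalIntegrable (fun u => γ u * u ^ n) MeasureTheory.volume c d :=
    fun c d => ((hγ.mul (continuous_pow n)).intervalIntegrable c d)
  have hint2 : ∀ c d : ℝ,
      IntervalIntegrable (fun u => (n:ℝ) * u ^ (n-1) * γ u) MeasureTheory.volume c d :=
    fun c d => (((continuous_const.mul (continuous_pow (n-1))).mul hγ).intervalIntegrable c d)
  -- lower bound for the first integral: ≥ ε^{n+1}/(n+1) > 0
  have hsplit1 : (∫ u in (0:ℝ)..(2*ε), γ u * u ^ n)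
      = (∫ u in (0:ℝ)..ε, γ u * u ^ n) + ∫ u in ε..(2*ε), γ u * u ^ n :=
    (intervalIntegral.integral_add_adjacent_intervals (hint1 0 ε) (hint1 ε (2*ε))).symm
  have hfirst : (∫ u in (0:ℝ)..ε, γ u * u ^ n) = ε ^ (n+1) / (n+1) := by
    have : (∫ u in (0:ℝ)..ε, γ u * u ^ n) = ∫ u in (0:ℝ)..ε, u ^ n := by
      apply intervalIntegral.integral_congr
      intro x hx
      rw [Set.uIcc_of_le hε.le] at hx
      simp only [hγ1 x hx, one_mul]
    rw [this, integral_pow]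
    simp
  have hsecond : 0 ≤ ∫ u in ε..(2*ε), γ u * u ^ n := by
    apply intervalIntegral.integral_nonneg hεle
    intro u hu
    have h0u : (0:ℝ) ≤ u := le_trans hε.le hu.1
    exact mul_nonneg (hγ01 u).1 (pow_nonneg h0u n)
  have hIpos : 0 < ∫ r in a..b, γ (ψ r) * ψ r ^ n * (-(ψ' r)) := by
    rw [hI, hsplit1, hfirst]
    have : 0 < ε ^ (n+1) / (n+1) := by positivity
    linarith
  -- upper bound for the first integral
  have hIub : (∫ r in a..b, γ (ψ r) * ψ r ^ n * (-(ψ' r))) ≤ (2*ε) ^ (n+1) / (n+1) := by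
    rw [hI]
    have h1 : (∫ u in (0:ℝ)..(2*ε), γ u * u ^ n) ≤ ∫ u in (0:ℝ)..(2*ε), u ^ n := by
      apply intervalIntegral.integral_mono_on h2ε (hint1 0 (2*ε))
        ((continuous_pow n).intervalIntegrable 0 (2*ε))
      intro u hu
      have h0u : (0:ℝ) ≤ u := hu.1
      calc γ u * u ^ n ≤ 1 * u ^ n :=
            mul_le_mul_of_nonneg_right (hγ01 u).2 (pow_nonneg h0u n)
        _ = u ^ n := one_mul _
    rw [integral_pow] at h1
    simpa using h1
  refine ⟨⟨hIpos, hIub⟩, ?_⟩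
  -- Part (ii)
  set c : ℝ := (1 - lam) * (n + 1) / (2 ^ (n + 1) * ε) with hc
  have hc0 : 0 ≤ c := by
    apply div_nonneg
    · have : (0:ℝ) ≤ 1 - lam := by linarith
      positivity
    · positivity
  -- LHS ≤ (1-lam) * ε^n
  have hLHS : c * (∫ r in a..b, γ (ψ r) * ψ r ^ n * (-(ψ' r))) ≤ (1 - lam) * ε ^ n := by
    have h1 : c * (∫ r in a..b, γ (ψ r) * ψ r ^ n * (-(ψ' r)))
        ≤ c * ((2*ε) ^ (n+1) / (n+1)) := mul_le_mul_of_nonneg_left hIub hc0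
    have h2 : c * ((2*ε) ^ (n+1) / (n+1)) = (1 - lam) * ε ^ n := by
      rw [hc, mul_pow]
      have hn1 : ((n:ℝ) + 1) ≠ 0 := by positivity
      have h2n : (2:ℝ) ^ (n+1) ≠ 0 := by positivity
      field_simp
      ring
    linarith
  -- RHS ≥ (1-lam) * ε^n
  have hcontψ' : ContinuousOn (fun r => (n:ℝ) * ψ r ^ (n-1) * (ψ' r) ^ 2 * γ (ψ r))
      (Set.Icc a b) :=
    ((continuousOn_const.mul (hψc.pow (n-1))).mul (hψ'cont.pow 2)).mul (hγ.comp_continuousOn hψc)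
  have hcontg2 : ContinuousOn
      (fun r => (1 - lam) * ((n:ℝ) * ψ r ^ (n-1) * γ (ψ r) * (-(ψ' r)))) (Set.Icc a b) :=
    continuousOn_const.mul (((continuousOn_const.mul (hψc.pow (n-1))).mul
      (hγ.comp_continuousOn hψc)).mul hψ'cont.neg)
  have hstep : (∫ r in a..b, (1 - lam) * ((n:ℝ) * ψ r ^ (n-1) * γ (ψ r) * (-(ψ' r))))
      ≤ ∫ r in a..b, (n : ℝ) * ψ r ^ (n - 1) * (ψ' r) ^ 2 * γ (ψ r) := by
    apply intervalIntegral.integral_mono_on hab'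
      ((hcontg2.mono huIcc.subset).intervalIntegrable)
      ((hcontψ'.mono huIcc.subset).intervalIntegrable)
    intro r hr
    have hu0 : 0 ≤ ψ r := hψ0 r hr
    have hp : 1 - lam ≤ -(ψ' r) := by have := (hψ'bd r hr).2; linarith
    have hq : 0 ≤ (n:ℝ) * ψ r ^ (n-1) * γ (ψ r) := by
      have := (hγ01 (ψ r)).1
      positivity
    have hsq : (ψ' r) ^ 2 = (-(ψ' r)) * (-(ψ' r)) := by ring
    calc (1 - lam) * ((n:ℝ) * ψ r ^ (n-1) * γ (ψ r) * (-(ψ' r)))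
        ≤ (-(ψ' r)) * ((n:ℝ) * ψ r ^ (n-1) * γ (ψ r) * (-(ψ' r))) := by
          apply mul_le_mul_of_nonneg_right hp
          exact mul_nonneg hq (by linarith)
      _ = (n : ℝ) * ψ r ^ (n - 1) * (ψ' r) ^ 2 * γ (ψ r) := by rw [hsq]; ring
  have hsub2 : (∫ r in a..b, ((n:ℝ) * ψ r ^ (n-1) * γ (ψ r)) * (-(ψ' r)))
      = ∫ u in (0:ℝ)..(2*ε), (n:ℝ) * u ^ (n-1) * γ u :=
    key (fun u => (n:ℝ) * u ^ (n-1) * γ u)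
      ((continuous_const.mul (continuous_pow (n-1))).mul hγ)
  have hg2val : ε ^ n ≤ ∫ u in (0:ℝ)..(2*ε), (n:ℝ) * u ^ (n-1) * γ u := by
    have hsplit2 : (∫ u in (0:ℝ)..(2*ε), (n:ℝ) * u ^ (n-1) * γ u)
        = (∫ u in (0:ℝ)..ε, (n:ℝ) * u ^ (n-1) * γ u)
          + ∫ u in ε..(2*ε), (n:ℝ) * u ^ (n-1) * γ u :=
      (intervalIntegral.integral_add_adjacent_intervals (hint2 0 ε) (hint2 ε (2*ε))).symm
    have hfst : (∫ u in (0:ℝ)..ε, (n:ℝ) * u ^ (n-1) * γ u) = ε ^ n := by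
      have he : (∫ u in (0:ℝ)..ε, (n:ℝ) * u ^ (n-1) * γ u)
          = ∫ u in (0:ℝ)..ε, (n:ℝ) * u ^ (n-1) := by
        apply intervalIntegral.integral_congr
        intro x hx
        rw [Set.uIcc_of_le hε.le] at hx
        simp only [hγ1 x hx, mul_one]
      rw [he, intervalIntegral.integral_const_mul, integral_pow]
      have hnn : n - 1 + 1 = n := Nat.succ_pred_eq_of_pos hn
      rw [hnn]
      have hn0 : (n:ℝ) ≠ 0 := Nat.cast_ne_zero.2 (by omega)
      field_simp
      have h0n : (0:ℝ) ^ n = 0 := zero_pow (by omega)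
      have hcast : ((n - 1 : ℕ) : ℝ) + 1 = n := by rw [Nat.cast_sub hn]; push_cast; ring
      rw [h0n, hcast]; ring
    have hsnd : 0 ≤ ∫ u in ε..(2*ε), (n:ℝ) * u ^ (n-1) * γ u := by
      apply intervalIntegral.integral_nonneg hεle
      intro u hu
      have h0u : (0:ℝ) ≤ u := le_trans hε.le hu.1
      have := (hγ01 u).1
      positivity
    rw [hsplit2, hfst]
    linarith
  have hRHS : (1 - lam) * ε ^ n ≤ ∫ r in a..b, (n : ℝ) * ψ r ^ (n - 1) * (ψ' r) ^ 2 * γ (ψ r) := by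
    have h3 : (∫ r in a..b, (1 - lam) * ((n:ℝ) * ψ r ^ (n-1) * γ (ψ r) * (-(ψ' r))))
        = (1 - lam) * ∫ r in a..b, ((n:ℝ) * ψ r ^ (n-1) * γ (ψ r)) * (-(ψ' r)) := by
      rw [intervalIntegral.integral_const_mul]
    have h4 : (1 - lam) * ε ^ n
        ≤ (1 - lam) * ∫ r in a..b, ((n:ℝ) * ψ r ^ (n-1) * γ (ψ r)) * (-(ψ' r)) := by
      rw [hsub2]
      exact mul_le_mul_of_nonneg_left hg2val (by linarith)
    calc (1 - lam) * ε ^ n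
        ≤ (1 - lam) * ∫ r in a..b, ((n:ℝ) * ψ r ^ (n-1) * γ (ψ r)) * (-(ψ' r)) := h4
      _ = ∫ r in a..b, (1 - lam) * ((n:ℝ) * ψ r ^ (n-1) * γ (ψ r) * (-(ψ' r))) := h3.symm
      _ ≤ _ := hstep
  linarith
end

section
/- Let n ≥ 1 be a natural number, ε > 0, λ ∈ (0,1), M ≥ 0, and a < b real numbers. Let ψ : ℝ → ℝ be twice continuously differentiable on [a,b] with ψ(a) = 2ε, ψ(b) = 0, and −1−λ ≤ ψ'(r) ≤ −(1−λ) for all r ∈ [a,b]. Let γ : ℝ → ℝ be continuously differentiable with 0 ≤ γ ≤ 1, γ(ρ) = 1 for all ρ ∈ [0,ε], and γ(ρ) = 0 for all ρ ≥ 2ε. Set D := ∫_a^b γ(ψ(s)) ψ(s)^n ψ'(s) ds and F(r) := (1/D) ∫_a^r γ(ψ(s)) ψ(s)^n ψ'(s) ds. Let K : ℝ → ℝ be integrable on [a,b] with |K(r)| ≤ M for all r ∈ [a,b]. Then ∫_a^b F''(r) dr + ∫_a^b n · γ(ψ(r)) · ψ(r)^{n−1} · ψ'(r)² / (−D) dr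 + ∫_a^b F(r) · K(r) dr ≥ (1−λ)(n+1)/(2^{n+1} ε) − (b−a) · M. -/
set_option maxHeartbeats 1000000 in
/-- Analytic core of the paper's Proposition 5.2: for the constructed cumulative
distribution function `F` and any integrable `K` with `|K| ≤ M` on `[a,b]`,
`∫_a^b F'' + ∫_a^b n γ(ψ) ψ^{n-1} (ψ')²/(-D) + ∫_a^b F·K ≥ (1-λ)(n+1)/(2^{n+1}ε) - (b-a)M`. -/
theorem stmt_5 (n : ℕ) (hn : 1 ≤ n) (ε lam M a b : ℝ) (hε : 0 < ε)
    (hlam : lam ∈ Set.Ioo (0 : ℝ) 1) (hM : 0 ≤ M) (hab : a < b)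
    (ψ ψ' ψ'' : ℝ → ℝ)
    (hψd : ∀ r ∈ Set.Icc a b, HasDerivAt ψ (ψ' r) r)
    (hψd2 : ∀ r ∈ Set.Icc a b, HasDerivAt ψ' (ψ'' r) r)
    (hψ''cont : ContinuousOn ψ'' (Set.Icc a b))
    (hψa : ψ a = 2 * ε) (hψb : ψ b = 0)
    (hψ'bd : ∀ r ∈ Set.Icc a b, -1 - lam ≤ ψ' r ∧ ψ' r ≤ -(1 - lam))
    (γ : ℝ → ℝ) (hγ : ContDiff ℝ 1 γ)
    (hγ01 : ∀ ρ, 0 ≤ γ ρ ∧ γ ρ ≤ 1)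
    (hγ1 : ∀ ρ ∈ Set.Icc (0 : ℝ) ε, γ ρ = 1)
    (hγ0 : ∀ ρ, 2 * ε ≤ ρ → γ ρ = 0)
    (D : ℝ) (hD : D = ∫ s in a..b, γ (ψ s) * ψ s ^ n * ψ' s)
    (F : ℝ → ℝ) (hF : ∀ r, F r = (1 / D) * ∫ s in a..r, γ (ψ s) * ψ s ^ n * ψ' s)
    (K : ℝ → ℝ) (hK : IntervalIntegrable K MeasureTheory.volume a b)
    (hKbd : ∀ r ∈ Set.Icc a b, |K r| ≤ M) :
    (∫ r in a..b, deriv (deriv F) r) +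
      (∫ r in a..b, (n : ℝ) * γ (ψ r) * ψ r ^ (n - 1) * (ψ' r) ^ 2 / (-D)) +
      (∫ r in a..b, F r * K r) ≥
      (1 - lam) * (n + 1) / (2 ^ (n + 1) * ε) - (b - a) * M := by
  obtain ⟨hlam0, hlam1⟩ := hlam
  have hab' : a ≤ b := hab.le
  have huIcc : Set.uIcc a b = Set.Icc a b := Set.uIcc_of_le hab'
  have hn1 : n - 1 + 1 = n := Nat.succ_pred_eq_of_pos hn
  -- continuity facts
  have hψcont : ContinuousOn ψ (Set.Icc a b) :=
    fun r hr => (hψd r hr).continuousAt.continuousWithinAt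
  have hψ'cont : ContinuousOn ψ' (Set.Icc a b) :=
    fun r hr => (hψd2 r hr).continuousAt.continuousWithinAt
  set G0 : ℝ → ℝ := fun u => γ u * u ^ n with hG0def
  have hG0cont : Continuous G0 := (hγ.continuous).mul (continuous_pow n)
  set g : ℝ → ℝ := fun s => γ (ψ s) * ψ s ^ n * ψ' s with hgdef
  have hgcont : ContinuousOn g (Set.Icc a b) :=
    ((hγ.continuous.comp_continuousOn hψcont).mul (hψcont.pow n)).mul hψ'cont
  -- substitution
  have hsub : ∀ r ∈ Set.Icc a b, (∫ s in a..r, g s) = ∫ u in (2*ε)..(ψ r), G0 u := by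
    intro r hr
    have hsubset : Set.uIcc a r ⊆ Set.Icc a b := by
      rw [Set.uIcc_of_le hr.1]; exact Set.Icc_subset_Icc le_rfl hr.2
    have h := intervalIntegral.integral_comp_smul_deriv (f := ψ) (f' := ψ') (g := G0)
      (fun x hx => hψd x (hsubset hx)) (hψ'cont.mono hsubset) hG0cont
    rw [← hψa, ← h]
    apply intervalIntegral.integral_congr
    intro x _
    simp only [hgdef, hG0def, smul_eq_mul, Function.comp]
    ring
  -- ψ is antitone, hence 0 ≤ ψ ≤ 2ε
  have hψanti : AntitoneOn ψ (Set.Icc a b) := by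
    apply antitoneOn_of_deriv_nonpos (convex_Icc a b) hψcont
    · intro x hx
      rw [interior_Icc] at hx
      exact ((hψd x (Set.Ioo_subset_Icc_self hx)).differentiableAt).differentiableWithinAt
    · intro x hx
      rw [interior_Icc] at hx
      rw [(hψd x (Set.Ioo_subset_Icc_self hx)).deriv]
      linarith [(hψ'bd x (Set.Ioo_subset_Icc_self hx)).2]
  have hψmem : ∀ r ∈ Set.Icc a b, 0 ≤ ψ r ∧ ψ r ≤ 2*ε := by
    intro r hr
    constructor
    · rw [← hψb]; exact hψanti hr (Set.right_mem_Icc.2 hab') hr.2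
    · rw [← hψa]; exact hψanti (Set.left_mem_Icc.2 hab') hr hr.1
  -- J and bounds on D
  set J : ℝ := ∫ u in (0:ℝ)..(2*ε), G0 u with hJdef
  have hG0nn : ∀ u : ℝ, 0 ≤ u → 0 ≤ G0 u := fun u hu =>
    mul_nonneg (hγ01 u).1 (pow_nonneg hu n)
  have hε2 : (0:ℝ) ≤ 2 * ε := by linarith
  have hJsplit : (∫ u in (0:ℝ)..ε, G0 u) + (∫ u in ε..(2*ε), G0 u) = J :=
    intervalIntegral.integral_add_adjacent_intervals
      (hG0cont.intervalIntegrable _ _) (hG0cont.intervalIntegrable _ _)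
  have hJ1seg : (∫ u in (0:ℝ)..ε, G0 u) = ε^(n+1)/(n+1) := by
    have : (∫ u in (0:ℝ)..ε, G0 u) = ∫ u in (0:ℝ)..ε, u ^ n := by
      apply intervalIntegral.integral_congr
      intro u hu
      rw [Set.uIcc_of_le hε.le] at hu
      simp [hG0def, hγ1 u hu]
    rw [this, integral_pow]
    simp
  have hJlow : ε^(n+1)/(n+1) ≤ J := by
    rw [← hJsplit, hJ1seg]
    have : 0 ≤ ∫ u in ε..(2*ε), G0 u := by
      apply intervalIntegral.integral_nonneg (by linarith)
      intro u hu
      exact hG0nn u (le_trans hε.le hu.1)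
    linarith
  have hJup : J ≤ (2*ε)^(n+1)/(n+1) := by
    have h1 : J ≤ ∫ u in (0:ℝ)..(2*ε), u ^ n := by
      apply intervalIntegral.integral_mono_on hε2
        (hG0cont.intervalIntegrable _ _) ((continuous_pow n).intervalIntegrable _ _)
      intro u hu
      have hun : (0:ℝ) ≤ u ^ n := pow_nonneg hu.1 n
      calc G0 u = γ u * u ^ n := rfl
        _ ≤ 1 * u ^ n := mul_le_mul_of_nonneg_right (hγ01 u).2 hun
        _ = u ^ n := one_mul _
    rwa [integral_pow, zero_pow (by omega), sub_zero] at h1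
  have hnp : (0:ℝ) < n + 1 := by positivity
  have hJpos : 0 < J := lt_of_lt_of_le (by positivity) hJlow
  have hDJ : D = -J := by
    have hb' : b ∈ Set.Icc a b := Set.right_mem_Icc.2 hab'
    have := hsub b hb'
    rw [hψb] at this
    rw [hD]
    show (∫ s in a..b, g s) = -J
    rw [this, hJdef, intervalIntegral.integral_symm]
  have hDne : D ≠ 0 := by rw [hDJ]; exact neg_ne_zero.2 (ne_of_gt hJpos)
  -- F values and bounds
  have hFval : ∀ r ∈ Set.Icc a b, F r = (∫ u in (ψ r)..(2*ε), G0 u) / J := by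
    intro r hr
    rw [hF, hsub r hr, hDJ, intervalIntegral.integral_symm]
    field_simp
  have hF01 : ∀ r ∈ Set.Icc a b, 0 ≤ F r ∧ F r ≤ 1 := by
    intro r hr
    obtain ⟨h0, h2⟩ := hψmem r hr
    have hTnn : 0 ≤ ∫ u in (ψ r)..(2*ε), G0 u := by
      apply intervalIntegral.integral_nonneg h2
      intro u hu
      exact hG0nn u (le_trans h0 hu.1)
    have hTle : (∫ u in (ψ r)..(2*ε), G0 u) ≤ J := by
      have hadj : (∫ u in (0:ℝ)..(ψ r), G0 u) + (∫ u in (ψ r)..(2*ε), G0 u) = J :=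
        intervalIntegral.integral_add_adjacent_intervals
          (hG0cont.intervalIntegrable _ _) (hG0cont.intervalIntegrable _ _)
      have h1 : 0 ≤ ∫ u in (0:ℝ)..(ψ r), G0 u := by
        apply intervalIntegral.integral_nonneg h0
        intro u hu
        exact hG0nn u hu.1
      linarith
    rw [hFval r hr]
    constructor
    · positivity
    · rw [div_le_one hJpos]; exact hTle
  -- First integral is zero
  set G : ℝ → ℝ := fun r =>
    (deriv γ (ψ r) * ψ' r * ψ r ^ n + γ (ψ r) * ((n:ℝ) * ψ r ^ (n-1) * ψ' r)) * ψ' r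
      + γ (ψ r) * ψ r ^ n * ψ'' r with hGdef
  have hgderiv : ∀ r ∈ Set.Icc a b, HasDerivAt g (G r) r := by
    intro r hr
    have h1 : HasDerivAt (fun x => γ (ψ x)) (deriv γ (ψ r) * ψ' r) r :=
      (((hγ.differentiable one_ne_zero) (ψ r)).hasDerivAt).comp r (hψd r hr)
    exact (h1.mul ((hψd r hr).pow n)).mul (hψd2 r hr)
  have hγ'cont : Continuous (deriv γ) := hγ.continuous_deriv le_rfl
  have hGcont : ContinuousOn G (Set.Icc a b) := by
    apply ContinuousOn.add
    · exact ((((hγ'cont.comp_continuousOn hψcont).mul hψ'cont).mul (hψcont.pow n)).add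
        ((hγ.continuous.comp_continuousOn hψcont).mul
          ((continuousOn_const.mul (hψcont.pow (n-1))).mul hψ'cont))).mul hψ'cont
    · exact ((hγ.continuous.comp_continuousOn hψcont).mul (hψcont.pow n)).mul hψ''cont
  have hFderiv : ∀ r ∈ Set.Ioo a b, HasDerivAt F ((1/D) * g r) r := by
    intro r hr
    have hnhds : Set.Icc a b ∈ nhds r := Icc_mem_nhds hr.1 hr.2
    have hsubset : Set.uIcc a r ⊆ Set.Icc a b := by
      rw [Set.uIcc_of_le hr.1.le]
      exact Set.Icc_subset_Icc le_rfl hr.2.le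
    have hint : IntervalIntegrable g MeasureTheory.volume a r :=
      (hgcont.mono hsubset).intervalIntegrable
    have hmeas : StronglyMeasurableAtFilter g (nhds r) :=
      ⟨Set.Icc a b, hnhds, hgcont.aestronglyMeasurable measurableSet_Icc⟩
    have hcont : ContinuousAt g r := hgcont.continuousAt hnhds
    have h := (intervalIntegral.integral_hasDerivAt_right hint hmeas hcont).const_mul (1/D)
    have hFeq : F = fun x => (1/D) * ∫ s in a..x, g s := funext hF
    rw [hFeq]
    exact h
  have hI1 : (∫ r in a..b, deriv (deriv F) r) = 0 := by
    have key : ∀ x ∈ Set.Ioo a b, deriv (deriv F) x = (1/D) * G x := by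
      intro x hx
      have hev : deriv F =ᶠ[nhds x] fun y => (1/D) * g y := by
        filter_upwards [Ioo_mem_nhds hx.1 hx.2] with y hy
        exact (hFderiv y hy).deriv
      rw [hev.deriv_eq]
      exact ((hgderiv x (Set.Ioo_subset_Icc_self hx)).const_mul (1/D)).deriv
    have hcongr : (∫ r in a..b, deriv (deriv F) r) = ∫ r in a..b, (1/D) * G r := by
      apply intervalIntegral.integral_congr_ae
      have hbne : ∀ᵐ x : ℝ, x ≠ b := by
        rw [MeasureTheory.ae_iff]
        simp only [ne_eq, not_not]
        simpa using MeasureTheory.measure_singleton (μ := MeasureTheory.volume) b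
      filter_upwards [hbne] with x hxb hxI
      rw [Set.uIoc_of_le hab'] at hxI
      exact key x ⟨hxI.1, lt_of_le_of_ne hxI.2 hxb⟩
    have hFTC : (∫ r in a..b, G r) = g b - g a := by
      apply intervalIntegral.integral_eq_sub_of_hasDerivAt
      · intro x hx
        exact hgderiv x (huIcc ▸ hx)
      · exact (hGcont.mono huIcc.subset).intervalIntegrable
    have hga : g a = 0 := by
      simp [hgdef, hψa, hγ0 (2*ε) le_rfl]
    have hgb : g b = 0 := by
      simp [hgdef, hψb, zero_pow (show n ≠ 0 by omega)]
    rw [hcongr, intervalIntegral.integral_const_mul, hFTC, hga, hgb]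
    ring
  -- Second integral bound
  set G1 : ℝ → ℝ := fun u => (n:ℝ) * γ u * u ^ (n-1) with hG1def
  have hG1cont : Continuous G1 := (continuous_const.mul hγ.continuous).mul (continuous_pow (n-1))
  have hsub1 : (∫ r in a..b, ψ' r * G1 (ψ r)) = ∫ u in (2*ε)..(0:ℝ), G1 u := by
    have h := intervalIntegral.integral_comp_smul_deriv (f := ψ) (f' := ψ') (g := G1)
      (fun x hx => hψd x (huIcc ▸ hx)) (hψ'cont.mono huIcc.subset) hG1cont
    rw [← hψa, ← hψb, ← h]
    apply intervalIntegral.integral_congr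
    intro x _
    simp [smul_eq_mul, Function.comp]
  set J1 : ℝ := ∫ u in (0:ℝ)..(2*ε), G1 u with hJ1def
  have hJ1low : ε^n ≤ J1 := by
    have hsplit : (∫ u in (0:ℝ)..ε, G1 u) + (∫ u in ε..(2*ε), G1 u) = J1 :=
      intervalIntegral.integral_add_adjacent_intervals
        (hG1cont.intervalIntegrable _ _) (hG1cont.intervalIntegrable _ _)
    have hseg : (∫ u in (0:ℝ)..ε, G1 u) = ε^n := by
      have h1 : (∫ u in (0:ℝ)..ε, G1 u) = ∫ u in (0:ℝ)..ε, (n:ℝ) * u ^ (n-1) := by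
        apply intervalIntegral.integral_congr
        intro u hu
        rw [Set.uIcc_of_le hε.le] at hu
        simp [hG1def, hγ1 u hu]
      rw [h1, intervalIntegral.integral_const_mul, integral_pow, hn1]
      rw [zero_pow (show n ≠ 0 by omega), sub_zero]
      field_simp
      exact_mod_cast hn1.symm
    have hnn : 0 ≤ ∫ u in ε..(2*ε), G1 u := by
      apply intervalIntegral.integral_nonneg (by linarith)
      intro u hu
      have hu0 : (0:ℝ) ≤ u := le_trans hε.le hu.1
      exact mul_nonneg (mul_nonneg (by positivity) (hγ01 u).1) (pow_nonneg hu0 _)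
    linarith
  have hI2 : (∫ r in a..b, (n : ℝ) * γ (ψ r) * ψ r ^ (n - 1) * (ψ' r) ^ 2 / (-D))
      ≥ (1 - lam) * (n + 1) / (2 ^ (n + 1) * ε) := by
    have hptcont : ContinuousOn (fun r => (n : ℝ) * γ (ψ r) * ψ r ^ (n - 1) * (ψ' r) ^ 2 / (-D))
        (Set.Icc a b) := by
      apply ContinuousOn.div_const
      exact (((continuousOn_const.mul (hγ.continuous.comp_continuousOn hψcont)).mul
        (hψcont.pow (n-1))).mul (hψ'cont.pow 2))
    have hlowcont : ContinuousOn (fun r => ((1-lam)/J) * (-(ψ' r) * G1 (ψ r))) (Set.Icc a b) :=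
      continuousOn_const.mul ((hψ'cont.neg).mul (hG1cont.comp_continuousOn hψcont))
    have hmono : (∫ r in a..b, ((1-lam)/J) * (-(ψ' r) * G1 (ψ r)))
        ≤ ∫ r in a..b, (n : ℝ) * γ (ψ r) * ψ r ^ (n - 1) * (ψ' r) ^ 2 / (-D) := by
      apply intervalIntegral.integral_mono_on hab'
        ((hlowcont.mono huIcc.subset).intervalIntegrable)
        ((hptcont.mono huIcc.subset).intervalIntegrable)
      intro x hx
      have hc : 0 ≤ (n:ℝ) * γ (ψ x) * ψ x ^ (n-1) :=
        mul_nonneg (mul_nonneg (by positivity) (hγ01 (ψ x)).1)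
          (pow_nonneg (hψmem x hx).1 _)
      have ht : 1 - lam ≤ -(ψ' x) := by linarith [(hψ'bd x hx).2]
      have ht0 : 0 ≤ -(ψ' x) := le_trans (by linarith) ht
      have hG1val : G1 (ψ x) = (n:ℝ) * γ (ψ x) * ψ x ^ (n-1) := rfl
      rw [hG1val, hDJ, neg_neg, div_eq_mul_inv, div_eq_mul_inv]
      have hkey : (1-lam) * (-(ψ' x) * ((n:ℝ) * γ (ψ x) * ψ x ^ (n-1)))
          ≤ (n:ℝ) * γ (ψ x) * ψ x ^ (n-1) * (ψ' x)^2 := by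
        nlinarith [mul_nonneg (mul_nonneg hc ht0) (sub_nonneg.2 ht)]
      have hJinv : (0:ℝ) ≤ J⁻¹ := inv_nonneg.2 hJpos.le
      calc (1-lam) * J⁻¹ * (-(ψ' x) * G1 (ψ x))
          = ((1-lam) * (-(ψ' x) * ((n:ℝ) * γ (ψ x) * ψ x ^ (n-1)))) * J⁻¹ := by
            rw [hG1val]; ring
        _ ≤ ((n:ℝ) * γ (ψ x) * ψ x ^ (n-1) * (ψ' x)^2) * J⁻¹ :=
            mul_le_mul_of_nonneg_right hkey hJinv
    have hlowval : (∫ r in a..b, ((1-lam)/J) * (-(ψ' r) * G1 (ψ r))) = ((1-lam)/J) * J1 := by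
      rw [intervalIntegral.integral_const_mul]
      have : (∫ r in a..b, -(ψ' r) * G1 (ψ r)) = -∫ r in a..b, ψ' r * G1 (ψ r) := by
        rw [← intervalIntegral.integral_neg]
        apply intervalIntegral.integral_congr
        intro x _; ring
      rw [this, hsub1, hJ1def, intervalIntegral.integral_symm, neg_neg]
    have hfinal : (1 - lam) * (n + 1) / (2 ^ (n + 1) * ε) ≤ ((1-lam)/J) * J1 := by
      have h2e : (2*ε)^(n+1) = 2^(n+1) * ε^(n+1) := mul_pow 2 ε (n+1)
      have hεn : (0:ℝ) < ε^n := by positivity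
      have h1lam : (0:ℝ) < 1 - lam := by linarith
      have hstep : (1 - lam) * (n + 1) / (2 ^ (n + 1) * ε) ≤ ((1-lam)/J) * ε^n := by
        rw [div_mul_eq_mul_div, div_le_div_iff₀ (by positivity) hJpos]
        have hJn : (n+1 : ℝ) * J ≤ 2^(n+1) * (ε^n * ε) := by
          have h3 := hJup
          rw [le_div_iff₀ hnp] at h3
          calc (n+1 : ℝ) * J = J * (n+1) := by ring
            _ ≤ (2*ε)^(n+1) := h3
            _ = 2^(n+1) * (ε^n * ε) := by rw [h2e, pow_succ ε n]
        nlinarith [mul_le_mul_of_nonneg_left hJn h1lam.le]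
      have hmul : ((1-lam)/J) * ε^n ≤ ((1-lam)/J) * J1 :=
        mul_le_mul_of_nonneg_left hJ1low (by positivity)
      linarith
    linarith [le_trans hfinal (le_trans (le_of_eq hlowval.symm) hmono)]
  -- Third integral bound
  have hI3 : (∫ r in a..b, F r * K r) ≥ -((b-a) * M) := by
    have hFcont : ContinuousOn F (Set.Icc a b) := by
      have hprim : ContinuousOn (fun x => ∫ s in a..x, g s) (Set.Icc a b) := by
        rw [← huIcc]
        apply intervalIntegral.continuousOn_primitive_interval
        rw [huIcc]
        exact hgcont.integrableOn_compact isCompact_Icc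
      have hFeq : F = fun x => (1/D) * ∫ s in a..x, g s := funext hF
      rw [hFeq]
      exact continuousOn_const.mul hprim
    have hFK : IntervalIntegrable (fun x => F x * K x) MeasureTheory.volume a b :=
      hK.continuousOn_mul (by rwa [huIcc])
    have hmono : (∫ r in a..b, (-M : ℝ)) ≤ ∫ r in a..b, F r * K r := by
      apply intervalIntegral.integral_mono_on hab' (intervalIntegrable_const) hFK
      intro x hx
      obtain ⟨hF0, hF1⟩ := hF01 x hx
      have h1 : |F x * K x| ≤ M := by
        rw [abs_mul]
        calc |F x| * |K x| ≤ 1 * M :=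
          mul_le_mul (by rwa [abs_of_nonneg hF0]) (hKbd x hx) (abs_nonneg _) zero_le_one
          _ = M := one_mul M
      linarith [neg_abs_le (F x * K x)]
    rw [intervalIntegral.integral_const, smul_eq_mul] at hmono
    linarith [hmono]
  rw [hI1]
  have := hI2
  have := hI3
  linarith
end

section
/- Let X and Y be measurable spaces, μ₁ and μ₂ probability measures on X, ν a probability measure on Y, and c : X × X → [0,∞] a measurable cost function. Define the cost C on (X × Y) × (X × Y) by C((x,p),(y,q)) := c(x,y). Then the optimal total transport cost for C between the product measures μ₁ ⊗ ν and μ₂ ⊗ ν equals the optimal total transport cost for c between μ₁ and μ₂; that is, the infimum over all couplings π of μ₁ ⊗ ν and μ₂ ⊗ ν of ∫ C dπ equals the infimum over all couplings σ of μ₁ and μ₂ of ∫ c dσ. -/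
open MeasureTheory

/-- The set of couplings of two measures: measures on the product whose marginals are the
two given measures. -/
def couplings {α β : Type*} [MeasurableSpace α] [MeasurableSpace β]
    (μ : Measure α) (ν : Measure β) : Set (Measure (α × β)) :=
  {π | π.map Prod.fst = μ ∧ π.map Prod.snd = ν}

/-- The optimal total transport cost between `μ` and `ν` for the cost `c`. -/
noncomputable def optCost {α β : Type*} [MeasurableSpace α] [MeasurableSpace β]
    (c : α → β → ENNReal) (μ : Measure α) (ν : Measure β) : ENNReal :=
  ⨅ π ∈ couplings μ ν, ∫⁻ z, c z.1 z.2 ∂π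

/-- Measure-theoretic content of the paper's Theorem 3.3: if the cost on a product
`X × Y` depends only on the `X`-coordinates, then the optimal total transport cost between
the product measures `μ₁ ⊗ ν` and `μ₂ ⊗ ν` equals the optimal total transport cost between
`μ₁` and `μ₂` on the base. -/
theorem stmt_7 {X Y : Type*} [MeasurableSpace X] [MeasurableSpace Y]
    (μ₁ μ₂ : Measure X) (ν : Measure Y)
    [IsProbabilityMeasure μ₁] [IsProbabilityMeasure μ₂] [IsProbabilityMeasure ν]
    (c : X → X → ENNReal) (hc : Measurable fun q : X × X => c q.1 q.2) :
    optCost (fun zp wq : X × Y => c zp.1 wq.1) (μ₁.prod ν) (μ₂.prod ν) =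
      optCost c μ₁ μ₂ := by
  apply le_antisymm
  · -- LHS ≤ RHS : from a coupling σ of μ₁, μ₂, build a coupling of the products
    refine le_iInf₂ fun σ hσ => ?_
    obtain ⟨h1, h2⟩ := hσ
    have hσprob : IsProbabilityMeasure σ := by
      constructor
      have h := congrArg (fun m : Measure X => m Set.univ) h1
      simp only [Measure.map_apply measurable_fst MeasurableSet.univ, Set.preimage_univ,
        measure_univ] at h
      exact h
    set g : (X × X) × Y → (X × Y) × (X × Y) :=
      fun z => ((z.1.1, z.2), (z.1.2, z.2)) with hg_def
    have hg : Measurable g :=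
      ((measurable_fst.fst.prodMk measurable_snd).prodMk
        (measurable_fst.snd.prodMk measurable_snd))
    set π : Measure ((X × Y) × (X × Y)) := (σ.prod ν).map g with hπ_def
    have hmem : π ∈ couplings (μ₁.prod ν) (μ₂.prod ν) := by
      constructor
      · rw [hπ_def, Measure.map_map measurable_fst hg]
        have : (Prod.fst ∘ g) = Prod.map (Prod.fst : X × X → X) (id : Y → Y) := rfl
        rw [this, ← Measure.map_prod_map _ _ measurable_fst measurable_id,
          Measure.map_id, h1]
      · rw [hπ_def, Measure.map_map measurable_snd hg]
        have : (Prod.snd ∘ g) = Prod.map (Prod.snd : X × X → X) (id : Y → Y) := rfl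
        rw [this, ← Measure.map_prod_map _ _ measurable_snd measurable_id,
          Measure.map_id, h2]
    refine (iInf₂_le π hmem).trans_eq ?_
    rw [hπ_def, lintegral_map (by exact hc.comp (measurable_fst.fst.prodMk measurable_snd.fst)) hg]
    calc ∫⁻ z, c (g z).1.1 (g z).2.1 ∂(σ.prod ν)
        = ∫⁻ w, c w.1 w.2 ∂((σ.prod ν).map Prod.fst) := (lintegral_map hc measurable_fst).symm
      _ = ∫⁻ z, c z.1 z.2 ∂σ := by
          rw [Measure.map_fst_prod, measure_univ, one_smul]
  · -- RHS ≤ LHS : push a coupling of the products forward to the base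
    refine le_iInf₂ fun π hπ => ?_
    obtain ⟨h1, h2⟩ := hπ
    set f : (X × Y) × (X × Y) → X × X := fun w => (w.1.1, w.2.1) with hf_def
    have hf : Measurable f := measurable_fst.fst.prodMk measurable_snd.fst
    have hmem : π.map f ∈ couplings μ₁ μ₂ := by
      constructor
      · rw [Measure.map_map measurable_fst hf]
        have : (Prod.fst ∘ f) = (Prod.fst ∘ (Prod.fst : (X × Y) × (X × Y) → X × Y)) := rfl
        rw [this, ← Measure.map_map measurable_fst measurable_fst, h1,
          Measure.map_fst_prod, measure_univ, one_smul]
      · rw [Measure.map_map measurable_snd hf]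
        have : (Prod.snd ∘ f) = (Prod.fst ∘ (Prod.snd : (X × Y) × (X × Y) → X × Y)) := rfl
        rw [this, ← Measure.map_map measurable_fst measurable_snd, h2,
          Measure.map_fst_prod, measure_univ, one_smul]
    refine (iInf₂_le (π.map f) hmem).trans_eq ?_
    rw [lintegral_map hc hf]
end
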